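/- arXiv:2506.20195 — 6 statements merged into one kernel-verified Lean document; each statement's English description precedes it below -/
import Mathlib

section
/- Let H be a real symmetric n×n matrix and U₀ an n×N real matrix such that U₀ᵀ H U₀ ≤ 0 (negative semidefinite as an N×N matrix). Then for every k > 0 and t ≥ 0, U₀ᵀ exp(−kHt) U₀ ≥ U₀ᵀ U₀ in the positive semidefinite order. -/
open Matrix NormedSpace

lemma exp_sub_one_sub_posSemidef {m : ℕ} (A : Matrix (Fin m) (Fin m) ℝ) (hA : A.IsHermitian) :
    (exp A - 1 - A).PosSemidef := by
  have hV := hA.spectral_theorem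
  set V : Matrix (Fin m) (Fin m) ℝ := (hA.eigenvectorUnitary : Matrix (Fin m) (Fin m) ℝ) with hVdef
  have hunit : V * star V = 1 := (Matrix.mem_unitaryGroup_iff).mp hA.eigenvectorUnitary.2
  have hunit' : star V * V = 1 := (Matrix.mem_unitaryGroup_iff').mp hA.eigenvectorUnitary.2
  have hU : IsUnit V := ⟨⟨V, star V, hunit, hunit'⟩, rfl⟩
  have hD : (RCLike.ofReal ∘ hA.eigenvalues : Fin m → ℝ) = hA.eigenvalues := by
    funext i; simp
  have hV' : A = V * diagonal hA.eigenvalues * star V := by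
    have := hV; simp only [hD] at this; exact this
  have hexp : exp A = V * diagonal (fun i => Real.exp (hA.eigenvalues i)) * star V := by
    conv_lhs => rw [hV']
    have hinv : (star V) = V⁻¹ := (Matrix.inv_eq_left_inv hunit').symm
    rw [hinv, Matrix.exp_conj _ _ hU, Matrix.exp_diagonal]
    congr 2
    rw [Pi.exp_def]
    funext i
    simp [Real.exp_eq_exp_ℝ]
  have key : exp A - 1 - A
      = V * diagonal (fun i => Real.exp (hA.eigenvalues i) - 1 - hA.eigenvalues i) * star V := by
    have : diagonal (fun i => Real.exp (hA.eigenvalues i) - 1 - hA.eigenvalues i)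
        = diagonal (fun i => Real.exp (hA.eigenvalues i)) - 1 - diagonal hA.eigenvalues := by
      rw [← Matrix.diagonal_one, ← Matrix.diagonal_sub, ← Matrix.diagonal_sub]
    rw [this, Matrix.mul_sub, Matrix.mul_sub, Matrix.sub_mul, Matrix.sub_mul, mul_one, hunit,
      ← hexp, ← hV']
  rw [key]
  have : star V = Vᴴ := rfl
  rw [this]
  exact (Matrix.posSemidef_diagonal_iff.mpr fun i => by
    have := Real.add_one_le_exp (hA.eigenvalues i); linarith).mul_mul_conjTranspose_same V

/-- If `U₀ᵀ H U₀ ≤ 0` (negative semidefinite) with `H` real symmetric, then for every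
`k > 0` and `t ≥ 0`, `U₀ᵀ exp(−kHt) U₀ ≥ U₀ᵀ U₀` in the positive semidefinite order. -/
theorem stmt_2 {n N : ℕ} (H : Matrix (Fin n) (Fin n) ℝ) (hH : H.IsSymm)
    (U₀ : Matrix (Fin n) (Fin N) ℝ)
    (hneg : (-(U₀ᵀ * H * U₀)).PosSemidef)
    (k t : ℝ) (hk : 0 < k) (ht : 0 ≤ t) :
    (U₀ᵀ * exp ((-(k * t)) • H) * U₀ - U₀ᵀ * U₀).PosSemidef := by
  set A := (-(k * t)) • H with hA
  have hAh : A.IsHermitian := by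
    rw [Matrix.IsHermitian, Matrix.conjTranspose_eq_transpose_of_trivial, hA,
      Matrix.transpose_smul, hH]
  have h1 := exp_sub_one_sub_posSemidef A hAh
  have h2 := h1.conjTranspose_mul_mul_same U₀
  have h3 : ((k * t) • (-(U₀ᵀ * H * U₀))).PosSemidef := by
    constructor
    · rw [Matrix.IsHermitian, Matrix.conjTranspose_smul]
      rw [hneg.1]
      simp
    · intro x
      have := hneg.2 x
      have e : (x.sum fun i xi => x.sum fun j xj => star xi * ((k * t) • -(U₀ᵀ * H * U₀)) i j * xj)
          = (k * t) * (x.sum fun i xi => x.sum fun j xj => star xi * (-(U₀ᵀ * H * U₀)) i j * xj) := by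
        simp only [Finsupp.sum, Finset.mul_sum]
        refine Finset.sum_congr rfl fun i _ => Finset.sum_congr rfl fun j _ => ?_
        simp only [Matrix.smul_apply, smul_eq_mul]
        ring
      rw [e]
      exact mul_nonneg (by positivity) this
  have h4 := h2.add h3
  have heq : U₀ᴴ * (exp A - 1 - A) * U₀ + (k * t) • (-(U₀ᵀ * H * U₀))
      = U₀ᵀ * exp A * U₀ - U₀ᵀ * U₀ := by
    rw [Matrix.conjTranspose_eq_transpose_of_trivial]
    rw [Matrix.mul_sub, Matrix.mul_sub, Matrix.sub_mul, Matrix.sub_mul, hA]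
    rw [Matrix.mul_smul, Matrix.smul_mul]
    rw [Matrix.mul_one]
    module
  rwa [heq] at h4
end

section
/- Let H be a real symmetric n×n matrix and U₀ ∈ ℝ^{n×N} with U₀ᵀ H U₀ < 0 (negative definite). Then the smallest eigenvalue of U₀ᵀ exp(−kHt) U₀ satisfies λ_min(U₀ᵀ exp(−kHt) U₀) ≥ λ_min(U₀ᵀ U₀) · exp(k|h₀|t) for all t ≥ 0, where h₀ = sup_{a ≠ 0} (aᵀ U₀ᵀ H U₀ a)/‖U₀ a‖² < 0. -/
open Matrix NormedSpace

/-- The smallest eigenvalue of a symmetric matrix, characterized as the infimum of the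
Rayleigh quotient over unit vectors. -/
noncomputable def minEig {N : ℕ} (M : Matrix (Fin N) (Fin N) ℝ) : ℝ :=
  sInf {r : ℝ | ∃ a : Fin N → ℝ, a ⬝ᵥ a = 1 ∧ r = a ⬝ᵥ (M *ᵥ a)}

lemma quad_diag {n : ℕ} {H : Matrix (Fin n) (Fin n) ℝ} (hH : H.IsHermitian)
    (d : Fin n → ℝ) (x : Fin n → ℝ) :
    x ⬝ᵥ (((hH.eigenvectorUnitary : Matrix (Fin n) (Fin n) ℝ) * diagonal d *
      star (hH.eigenvectorUnitary : Matrix (Fin n) (Fin n) ℝ)) *ᵥ x)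
      = ∑ i, d i * ((star (hH.eigenvectorUnitary : Matrix (Fin n) (Fin n) ℝ) *ᵥ x) i)^2 := by
  set V : Matrix (Fin n) (Fin n) ℝ := (hH.eigenvectorUnitary : Matrix (Fin n) (Fin n) ℝ)
  have hstar : star V = Vᵀ := by
    ext i j; simp [Matrix.star_apply]
  rw [← Matrix.mulVec_mulVec, ← Matrix.mulVec_mulVec, Matrix.dotProduct_mulVec, hstar,
    ← Matrix.mulVec_transpose V x]
  simp only [dotProduct, Matrix.mulVec_diagonal]
  exact Finset.sum_congr rfl fun i _ => by ring

lemma sum_sq_c {n : ℕ} {H : Matrix (Fin n) (Fin n) ℝ} (hH : H.IsHermitian) (x : Fin n → ℝ) :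
    x ⬝ᵥ x = ∑ i, ((star (hH.eigenvectorUnitary : Matrix (Fin n) (Fin n) ℝ) *ᵥ x) i)^2 := by
  have h1 : (hH.eigenvectorUnitary : Matrix (Fin n) (Fin n) ℝ) *
      star (hH.eigenvectorUnitary : Matrix (Fin n) (Fin n) ℝ) = 1 :=
    Matrix.mem_unitaryGroup_iff.mp (hH.eigenvectorUnitary).2
  have h := quad_diag hH (fun _ => 1) x
  simp only [Matrix.diagonal_one, Matrix.mul_one, h1, Matrix.one_mulVec, one_mul] at h
  simpa using h

lemma quad_H {n : ℕ} {H : Matrix (Fin n) (Fin n) ℝ} (hH : H.IsHermitian) (x : Fin n → ℝ) :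
    x ⬝ᵥ (H *ᵥ x) = ∑ i, hH.eigenvalues i *
      ((star (hH.eigenvectorUnitary : Matrix (Fin n) (Fin n) ℝ) *ᵥ x) i)^2 := by
  have hspec := hH.spectral_theorem
  have hco : (RCLike.ofReal ∘ hH.eigenvalues : Fin n → ℝ) = hH.eigenvalues := rfl
  rw [hco] at hspec
  conv_lhs => rw [hspec]
  exact quad_diag hH _ x

lemma exp_smul_eq {n : ℕ} {H : Matrix (Fin n) (Fin n) ℝ} (hH : H.IsHermitian) (s : ℝ) :
    NormedSpace.exp (s • H) = (hH.eigenvectorUnitary : Matrix (Fin n) (Fin n) ℝ) *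
      diagonal (fun i => Real.exp (s * hH.eigenvalues i)) *
      star (hH.eigenvectorUnitary : Matrix (Fin n) (Fin n) ℝ) := by
  set V : Matrix (Fin n) (Fin n) ℝ := (hH.eigenvectorUnitary : Matrix (Fin n) (Fin n) ℝ)
  have h1 : V * star V = 1 := Matrix.mem_unitaryGroup_iff.mp (hH.eigenvectorUnitary).2
  have h2 : star V * V = 1 := Matrix.mem_unitaryGroup_iff'.mp (hH.eigenvectorUnitary).2
  have hU : IsUnit V := ⟨⟨V, star V, h1, h2⟩, rfl⟩
  have hVinv : V⁻¹ = star V := Matrix.inv_eq_right_inv h1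
  have hspec := hH.spectral_theorem
  have hco : (RCLike.ofReal ∘ hH.eigenvalues : Fin n → ℝ) = hH.eigenvalues := rfl
  rw [hco] at hspec
  have hsmul : s • H = V * diagonal (fun i => s * hH.eigenvalues i) * star V := by
    conv_lhs => rw [hspec, Unitary.conjStarAlgAut_apply]
    have h3 : (fun i => s * hH.eigenvalues i) = s • hH.eigenvalues := rfl
    rw [h3, Matrix.diagonal_smul, Matrix.mul_smul, Matrix.smul_mul]
  rw [hsmul, ← hVinv, Matrix.exp_conj V _ hU, Matrix.exp_diagonal, hVinv]
  congr 2
  rw [Pi.exp_def]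
  funext i
  rw [← Real.exp_eq_exp_ℝ]

lemma quad_exp_jensen {n : ℕ} {H : Matrix (Fin n) (Fin n) ℝ} (hH : H.IsHermitian)
    (s : ℝ) (x : Fin n → ℝ) (hx : 0 < x ⬝ᵥ x) :
    (x ⬝ᵥ x) * Real.exp (s * (x ⬝ᵥ (H *ᵥ x)) / (x ⬝ᵥ x)) ≤ x ⬝ᵥ (NormedSpace.exp (s • H) *ᵥ x) := by
  set c : Fin n → ℝ := star (hH.eigenvectorUnitary : Matrix (Fin n) (Fin n) ℝ) *ᵥ x with hc
  set μ := hH.eigenvalues with hμ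
  have hS : x ⬝ᵥ x = ∑ i, (c i)^2 := sum_sq_c hH x
  have hQ : x ⬝ᵥ (H *ᵥ x) = ∑ i, μ i * (c i)^2 := quad_H hH x
  have hE : x ⬝ᵥ (NormedSpace.exp (s • H) *ᵥ x) = ∑ i, Real.exp (s * μ i) * (c i)^2 := by
    rw [exp_smul_eq hH s]; exact quad_diag hH _ x
  have hwnn : ∀ i ∈ Finset.univ, (0:ℝ) ≤ (c i)^2 := fun i _ => sq_nonneg _
  have hwpos : 0 < ∑ i, (c i)^2 := hS ▸ hx
  have hmem : ∀ i ∈ Finset.univ, s * μ i ∈ Set.univ := fun _ _ => trivial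
  have hj := convexOn_exp.map_centerMass_le hwnn hwpos hmem
  simp only [Finset.centerMass, smul_eq_mul, Function.comp] at hj
  have hsum : ∑ i, (c i)^2 * (s * μ i) = s * (x ⬝ᵥ (H *ᵥ x)) := by
    rw [hQ, Finset.mul_sum]
    exact Finset.sum_congr rfl fun i _ => by ring
  rw [hsum, ← hS] at hj
  rw [show (x ⬝ᵥ x)⁻¹ * (s * (x ⬝ᵥ (H *ᵥ x))) = s * (x ⬝ᵥ (H *ᵥ x)) / (x ⬝ᵥ x) from
    (div_eq_inv_mul _ _).symm] at hj
  rw [hE]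
  calc (x ⬝ᵥ x) * Real.exp (s * (x ⬝ᵥ (H *ᵥ x)) / (x ⬝ᵥ x))
      ≤ (x ⬝ᵥ x) * ((x ⬝ᵥ x)⁻¹ * ∑ i, (c i)^2 * Real.exp (s * μ i)) :=
        mul_le_mul_of_nonneg_left hj hx.le
    _ = ∑ i, Real.exp (s * μ i) * (c i)^2 := by
        rw [← mul_assoc, mul_inv_cancel₀ hx.ne', one_mul]
        exact Finset.sum_congr rfl fun i _ => by ring

lemma sandwich {n N : ℕ} (U₀ : Matrix (Fin n) (Fin N) ℝ) (M : Matrix (Fin n) (Fin n) ℝ)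
    (a : Fin N → ℝ) :
    a ⬝ᵥ ((U₀ᵀ * M * U₀) *ᵥ a) = (U₀ *ᵥ a) ⬝ᵥ (M *ᵥ (U₀ *ᵥ a)) := by
  rw [← Matrix.mulVec_mulVec, ← Matrix.mulVec_mulVec, Matrix.dotProduct_mulVec,
    Matrix.vecMul_transpose]

lemma sandwich1 {n N : ℕ} (U₀ : Matrix (Fin n) (Fin N) ℝ) (a : Fin N → ℝ) :
    a ⬝ᵥ ((U₀ᵀ * U₀) *ᵥ a) = (U₀ *ᵥ a) ⬝ᵥ (U₀ *ᵥ a) := by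
  rw [← Matrix.mulVec_mulVec, Matrix.dotProduct_mulVec, Matrix.vecMul_transpose]

/-- If `U₀ᵀ H U₀ < 0` (negative definite) with `H` real symmetric, then
`λ_min(U₀ᵀ exp(−kHt) U₀) ≥ λ_min(U₀ᵀU₀) · exp(k|h₀|t)` for all `t ≥ 0`, where
`h₀ = sup_{a ≠ 0} (aᵀ U₀ᵀ H U₀ a)/‖U₀ a‖² < 0`. -/
theorem stmt_3 {n N : ℕ} (H : Matrix (Fin n) (Fin n) ℝ) (hH : H.IsSymm)
    (U₀ : Matrix (Fin n) (Fin N) ℝ)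
    (hneg : (-(U₀ᵀ * H * U₀)).PosDef)
    (k : ℝ) (hk : 0 < k)
    (h₀ : ℝ)
    (hh₀ : IsLUB {r : ℝ | ∃ a : Fin N → ℝ, a ≠ 0 ∧
        r = (a ⬝ᵥ ((U₀ᵀ * H * U₀) *ᵥ a)) / ((U₀ *ᵥ a) ⬝ᵥ (U₀ *ᵥ a))} h₀)
    (hh₀neg : h₀ < 0) :
    ∀ t ≥ (0:ℝ),
      minEig (U₀ᵀ * U₀) * Real.exp (k * |h₀| * t) ≤
        minEig (U₀ᵀ * NormedSpace.exp ((-(k * t)) • H) * U₀) := by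
  intro t ht
  have hHerm : H.IsHermitian := by
    simpa [Matrix.IsHermitian, Matrix.IsSymm, Matrix.conjTranspose_eq_transpose_of_trivial] using hH
  have hkt : 0 ≤ k * t := mul_nonneg hk.le ht
  -- N is positive
  have hNpos : 0 < N := by
    rcases Nat.eq_zero_or_pos N with h0 | h
    · exfalso
      subst h0
      have hub : ∀ r : ℝ, r ∈ upperBounds {r : ℝ | ∃ a : Fin 0 → ℝ, a ≠ 0 ∧
          r = (a ⬝ᵥ ((U₀ᵀ * H * U₀) *ᵥ a)) / ((U₀ *ᵥ a) ⬝ᵥ (U₀ *ᵥ a))} := by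
        intro r s hs
        rcases hs with ⟨a, ha, _⟩
        exact absurd (Subsingleton.elim a 0) ha
      have h1 := hh₀.2 (hub (h₀ - 1))
      linarith
    · exact h
  -- lower bound 0 for the U₀ᵀU₀ Rayleigh set
  have hbdd : ∀ r ∈ {r : ℝ | ∃ a : Fin N → ℝ, a ⬝ᵥ a = 1 ∧ r = a ⬝ᵥ ((U₀ᵀ * U₀) *ᵥ a)},
      (0:ℝ) ≤ r := by
    rintro r ⟨b, hb, rfl⟩
    rw [sandwich1]
    exact Finset.sum_nonneg fun i _ => mul_self_nonneg _
  -- key pointwise bound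
  have key : ∀ a : Fin N → ℝ, a ⬝ᵥ a = 1 →
      minEig (U₀ᵀ * U₀) * Real.exp (k * |h₀| * t) ≤
        a ⬝ᵥ ((U₀ᵀ * NormedSpace.exp ((-(k * t)) • H) * U₀) *ᵥ a) := by
    intro a ha
    have ha0 : a ≠ 0 := by
      intro h; rw [h] at ha; simp [dotProduct] at ha
    set x : Fin n → ℝ := U₀ *ᵥ a with hxdef
    have hquadneg : x ⬝ᵥ (H *ᵥ x) < 0 := by
      have hp := hneg.dotProduct_mulVec_pos ha0
      have hstar : (star a : Fin N → ℝ) = a := by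
        funext i; simp
      rw [hstar, Matrix.neg_mulVec, dotProduct_neg] at hp
      have := neg_pos.mp hp
      rwa [sandwich] at this
    have hx0 : x ≠ 0 := by
      intro h; rw [h] at hquadneg; simp at hquadneg
    have hS : 0 < x ⬝ᵥ x := by
      rcases lt_or_eq_of_le (Finset.sum_nonneg fun i _ => mul_self_nonneg (x i) :
        (0:ℝ) ≤ x ⬝ᵥ x) with h | h
      · exact h
      · exact absurd (dotProduct_self_eq_zero.mp h.symm) hx0
    have hray : (x ⬝ᵥ (H *ᵥ x)) / (x ⬝ᵥ x) ≤ h₀ :=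
      hh₀.1 ⟨a, ha0, by rw [sandwich]⟩
    have hjensen := quad_exp_jensen hHerm (-(k * t)) x hS
    have hargle : k * |h₀| * t ≤ (-(k * t)) * (x ⬝ᵥ (H *ᵥ x)) / (x ⬝ᵥ x) := by
      have h1 : -h₀ ≤ -((x ⬝ᵥ (H *ᵥ x)) / (x ⬝ᵥ x)) := neg_le_neg hray
      have h2 : (k * t) * (-h₀) ≤ (k * t) * (-((x ⬝ᵥ (H *ᵥ x)) / (x ⬝ᵥ x))) :=
        mul_le_mul_of_nonneg_left h1 hkt
      have h3 : k * |h₀| * t = (k * t) * (-h₀) := by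
        rw [abs_of_neg hh₀neg]; ring
      have h4 : (-(k * t)) * (x ⬝ᵥ (H *ᵥ x)) / (x ⬝ᵥ x)
          = (k * t) * (-((x ⬝ᵥ (H *ᵥ x)) / (x ⬝ᵥ x))) := by ring
      rw [h3, h4]; exact h2
    have hmin_le : minEig (U₀ᵀ * U₀) ≤ x ⬝ᵥ x := by
      have hmem : (x ⬝ᵥ x) ∈ {r : ℝ | ∃ b : Fin N → ℝ, b ⬝ᵥ b = 1 ∧
          r = b ⬝ᵥ ((U₀ᵀ * U₀) *ᵥ b)} := ⟨a, ha, (sandwich1 U₀ a).symm⟩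
      exact csInf_le ⟨0, hbdd⟩ hmem
    have hfinal : a ⬝ᵥ ((U₀ᵀ * NormedSpace.exp ((-(k * t)) • H) * U₀) *ᵥ a)
        = x ⬝ᵥ (NormedSpace.exp ((-(k * t)) • H) *ᵥ x) := sandwich U₀ _ a
    rw [hfinal]
    calc minEig (U₀ᵀ * U₀) * Real.exp (k * |h₀| * t)
        ≤ (x ⬝ᵥ x) * Real.exp (k * |h₀| * t) :=
          mul_le_mul_of_nonneg_right hmin_le (Real.exp_pos _).le
      _ ≤ (x ⬝ᵥ x) * Real.exp ((-(k * t)) * (x ⬝ᵥ (H *ᵥ x)) / (x ⬝ᵥ x)) :=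
          mul_le_mul_of_nonneg_left (Real.exp_le_exp.mpr hargle) hS.le
      _ ≤ x ⬝ᵥ (NormedSpace.exp ((-(k * t)) • H) *ᵥ x) := hjensen
  -- conclude via le_csInf
  have hne : {r : ℝ | ∃ a : Fin N → ℝ, a ⬝ᵥ a = 1 ∧
      r = a ⬝ᵥ ((U₀ᵀ * NormedSpace.exp ((-(k * t)) • H) * U₀) *ᵥ a)}.Nonempty := by
    refine ⟨_, ⟨Pi.single ⟨0, hNpos⟩ 1, ?_, rfl⟩⟩
    simp [dotProduct, Pi.single_apply]
  exact le_csInf hne (by rintro r ⟨a, ha, rfl⟩; exact key a ha)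
end

section
/- Let Λ = diag(λ₁,…,λ_m) be a real diagonal m×m matrix and α₀ ∈ ℝ^{m×N} such that the matrix M(t) := I_N − α₀ᵀα₀ + α₀ᵀ exp(−2Λt) α₀ is invertible for all t ≥ 0. Then α(t) := exp(−Λt) α₀ M(t)^{−1/2} satisfies the Oja flow equation dα/dt = −(Λα − α αᵀ Λ α) up to right multiplication by a time-dependent orthogonal matrix; equivalently, the symmetric matrix Z(t) := α(t)α(t)ᵀ = exp(−Λt) α₀ M(t)^{−1} α₀ᵀ exp(−Λt) satisfies dZ/dt = −(ΛZ + ZΛ − 2ZΛZ). -/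
open Matrix NormedSpace

section Aux

variable {n₁ n₂ : Type*} [Fintype n₁] [Fintype n₂]

/-- Key noncommutative algebra identity for the Oja flow computation. -/
lemma oja_aux (L E : Matrix n₁ n₁ ℝ) (A : Matrix n₁ n₂ ℝ) (B : Matrix n₂ n₁ ℝ)
    (P : Matrix n₂ n₂ ℝ) (hc : L * E = E * L) :
    ((-(L * E)) * (A * P * B) + E * (A * (-(P * (B * (-(L * (E * E)) + -(L * (E * E))) * A) * P)) * B)) * E
      + (E * (A * P * B)) * (-(L * E))
    = -(L * (E * (A * P * B) * E) + (E * (A * P * B) * E) * L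
        - ((E * (A * P * B) * E) * L * (E * (A * P * B) * E)
           + (E * (A * P * B) * E) * L * (E * (A * P * B) * E))) := by
  have swap : ∀ X : Matrix n₁ n₁ ℝ, E * (L * X) = L * (E * X) := fun X => by
    rw [← Matrix.mul_assoc, ← hc, Matrix.mul_assoc]
  have swap2 : E * L = L * E := hc.symm
  simp only [Matrix.mul_assoc, Matrix.neg_mul, Matrix.mul_neg, neg_neg, Matrix.mul_add,
    Matrix.add_mul, neg_add]
  simp only [swap, swap2]
  abel

end Aux


/-- Let `Λ = diagonal d` and `α₀ ∈ ℝ^{m×N}` be such that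
`M(t) = I − α₀ᵀα₀ + α₀ᵀ exp(−2Λt) α₀` is invertible for all `t ≥ 0`.  Then
`Z(t) = exp(−Λt) α₀ M(t)⁻¹ α₀ᵀ exp(−Λt)` satisfies `dZ/dt = −(ΛZ + ZΛ − 2ZΛZ)`
(entrywise derivative). -/
theorem stmt_4 {m N : ℕ} (d : Fin m → ℝ) (α₀ : Matrix (Fin m) (Fin N) ℝ)
    (M : ℝ → Matrix (Fin N) (Fin N) ℝ)
    (hM : ∀ t : ℝ, M t = 1 - α₀ᵀ * α₀ + α₀ᵀ * NormedSpace.exp ((-(2 * t)) • diagonal d) * α₀)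
    (hMinv : ∀ t ≥ (0:ℝ), IsUnit (M t))
    (Z : ℝ → Matrix (Fin m) (Fin m) ℝ)
    (hZ : ∀ t : ℝ, Z t =
      NormedSpace.exp ((-t) • diagonal d) * α₀ * (M t)⁻¹ * α₀ᵀ * NormedSpace.exp ((-t) • diagonal d)) :
    ∀ t ≥ (0:ℝ), ∀ i j : Fin m,
      HasDerivWithinAt (fun s => Z s i j)
        ((-(diagonal d * Z t + Z t * diagonal d - 2 • (Z t * diagonal d * Z t))) i j)
        (Set.Ici 0) t := by
  intro t ht i j
  classical
  letI : SeminormedRing (Matrix (Fin N) (Fin N) ℝ) := Matrix.linftyOpSemiNormedRing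
  letI : NormedRing (Matrix (Fin N) (Fin N) ℝ) := Matrix.linftyOpNormedRing
  letI : NormedAlgebra ℝ (Matrix (Fin N) (Fin N) ℝ) := Matrix.linftyOpNormedAlgebra
  letI : SeminormedRing (Matrix (Fin m) (Fin m) ℝ) := Matrix.linftyOpSemiNormedRing
  letI : NormedRing (Matrix (Fin m) (Fin m) ℝ) := Matrix.linftyOpNormedRing
  letI : NormedAlgebra ℝ (Matrix (Fin m) (Fin m) ℝ) := Matrix.linftyOpNormedAlgebra
  set Λ : Matrix (Fin m) (Fin m) ℝ := diagonal d with hΛ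
  set E : ℝ → Matrix (Fin m) (Fin m) ℝ := fun s => NormedSpace.exp ((-s) • Λ) with hEdef
  -- commutation
  have hcomm : ∀ s : ℝ, Λ * E s = E s * Λ := by
    intro s
    have : Commute Λ ((-s) • Λ) := (Commute.refl Λ).smul_right _
    exact (this.exp_right)
  -- derivative of E
  have hE : ∀ s : ℝ, HasDerivAt E (-(Λ * E s)) s := by
    intro s
    have h1 : HasDerivAt (fun u : ℝ => -u) (-1 : ℝ) s := (hasDerivAt_id s).neg
    have h2 := (hasDerivAt_exp_smul_const' (𝕂 := ℝ) Λ (-s)).scomp (x := s) h1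
    simp only [Function.comp_def, neg_one_smul] at h2
    exact h2
  -- derivative of W s = exp ((-(2*s)) • Λ)
  set W : ℝ → Matrix (Fin m) (Fin m) ℝ := fun s => NormedSpace.exp ((-(2 * s)) • Λ) with hWdef
  have hW : HasDerivAt W (-(Λ * W t) + -(Λ * W t)) t := by
    have h1 : HasDerivAt (fun u : ℝ => -(2 * u)) (-2 : ℝ) t := by
      have h := ((hasDerivAt_id t).const_mul (2:ℝ)).neg; rw [mul_one] at h; exact h
    have h2 := (hasDerivAt_exp_smul_const' (𝕂 := ℝ) Λ (-(2 * t))).scomp (x := t) h1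
    have heq : ((-2 : ℝ)) • (Λ * NormedSpace.exp ((-(2 * t)) • Λ)) = -(Λ * W t) + -(Λ * W t) := by
      rw [neg_smul, two_smul]
      simp only [hWdef, neg_add]
    rw [← heq]
    exact h2
  -- the linear map X ↦ α₀ᵀ * X * α₀, as a continuous linear map
  let l₂ : Matrix (Fin m) (Fin m) ℝ →ₗ[ℝ] Matrix (Fin N) (Fin N) ℝ :=
    { toFun := fun X => α₀ᵀ * X * α₀
      map_add' := by intro x y; simp [Matrix.mul_add, Matrix.add_mul]
      map_smul' := by intro c x; simp [Matrix.mul_smul, Matrix.smul_mul] }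
  -- derivative of M
  have hMd : HasDerivAt M (α₀ᵀ * (-(Λ * W t) + -(Λ * W t)) * α₀) t := by
    have hfun : M = fun s => (1 - α₀ᵀ * α₀) + l₂.toContinuousLinearMap (W s) := by
      funext s
      rw [hM s]
      simp only [l₂, LinearMap.coe_toContinuousLinearMap', LinearMap.coe_mk, AddHom.coe_mk]
      rfl
    rw [hfun]
    have h2 := (l₂.toContinuousLinearMap.hasFDerivAt (x := W t)).comp_hasDerivAt t hW
    have h3 := h2.const_add (1 - α₀ᵀ * α₀)
    exact h3
  -- derivative of the inverse of M
  set Md : Matrix (Fin N) (Fin N) ℝ := α₀ᵀ * (-(Λ * W t) + -(Λ * W t)) * α₀ with hMddef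
  have hu := hMinv t ht
  have hP : HasDerivAt (fun s => (M s)⁻¹) (-((M t)⁻¹ * Md * (M t)⁻¹)) t := by
    have hfd := hasFDerivAt_ringInverse (𝕜 := ℝ) hu.unit
    rw [hu.unit_spec] at hfd
    have h2 := hfd.comp_hasDerivAt t hMd
    have hinv : (↑hu.unit⁻¹ : Matrix (Fin N) (Fin N) ℝ) = (M t)⁻¹ := by
      rw [Matrix.nonsing_inv_eq_ringInverse, ← Ring.inverse_unit hu.unit, hu.unit_spec]
    simp only [ContinuousLinearMap.neg_apply, ContinuousLinearMap.mulLeftRight_apply, hinv] at h2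
    have hfun : (fun s => (M s)⁻¹) = fun s => Ring.inverse (M s) := by
      funext s; rw [Matrix.nonsing_inv_eq_ringInverse]
    rw [hfun]
    exact h2
  -- derivative of G s = α₀ * (M s)⁻¹ * α₀ᵀ
  let l₁ : Matrix (Fin N) (Fin N) ℝ →ₗ[ℝ] Matrix (Fin m) (Fin m) ℝ :=
    { toFun := fun X => α₀ * X * α₀ᵀ
      map_add' := by intro x y; simp [Matrix.mul_add, Matrix.add_mul]
      map_smul' := by intro c x; simp [Matrix.mul_smul, Matrix.smul_mul] }
  have hG : HasDerivAt (fun s => α₀ * (M s)⁻¹ * α₀ᵀ)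
      (α₀ * (-((M t)⁻¹ * Md * (M t)⁻¹)) * α₀ᵀ) t := by
    have h2 := (l₁.toContinuousLinearMap.hasFDerivAt (x := (M t)⁻¹)).comp_hasDerivAt t hP
    exact h2
  -- derivative of Z
  have hZfun : Z = fun s => E s * (α₀ * (M s)⁻¹ * α₀ᵀ) * E s := by
    funext s
    rw [hZ s]
    simp only [hEdef, Matrix.mul_assoc]
  have hZt : Z t = E t * (α₀ * (M t)⁻¹ * α₀ᵀ) * E t := by rw [hZfun]
  have hZd : HasDerivAt Z
      (((-(Λ * E t)) * (α₀ * (M t)⁻¹ * α₀ᵀ) + E t * (α₀ * (-((M t)⁻¹ * Md * (M t)⁻¹)) * α₀ᵀ)) * E t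
        + (E t * (α₀ * (M t)⁻¹ * α₀ᵀ)) * (-(Λ * E t))) t := by
    rw [hZfun]
    exact ((hE t).mul hG).mul (hE t)
  -- identify W t with E t * E t
  have hW2 : W t = E t * E t := by
    have harg : (-(2 * t)) • Λ = (-t) • Λ + (-t) • Λ := by
      rw [← add_smul]; ring_nf
    rw [hWdef]
    simp only [harg]
    exact Matrix.exp_add_of_commute _ _ (Commute.refl _)
  -- the key algebraic identity
  have hkey : (((-(Λ * E t)) * (α₀ * (M t)⁻¹ * α₀ᵀ) + E t * (α₀ * (-((M t)⁻¹ * Md * (M t)⁻¹)) * α₀ᵀ)) * E t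
        + (E t * (α₀ * (M t)⁻¹ * α₀ᵀ)) * (-(Λ * E t)))
      = -(Λ * Z t + Z t * Λ - 2 • (Z t * Λ * Z t)) := by
    have h2s : (2 : ℕ) • (Z t * Λ * Z t) = Z t * Λ * Z t + Z t * Λ * Z t := two_smul _ _
    rw [h2s, hZt, hMddef, hW2]
    exact oja_aux Λ (E t) α₀ α₀ᵀ (M t)⁻¹ (hcomm t)
  rw [hkey] at hZd
  -- project to the (i, j) entry
  let lij : Matrix (Fin m) (Fin m) ℝ →ₗ[ℝ] ℝ :=
    { toFun := fun A => A i j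
      map_add' := by intro x y; simp [Matrix.add_apply]
      map_smul' := by intro c x; simp [Matrix.smul_apply] }
  have hfin := (lij.toContinuousLinearMap.hasFDerivAt
      (x := Z t)).comp_hasDerivWithinAt t (hZd.hasDerivWithinAt (s := Set.Ici 0))
  exact hfin
end

section
/- If a C¹ solution U(t) of dU/dt = −(HU − U UᵀHU) (H real symmetric n×n) satisfies U(0)ᵀU(0) = I_N, then U(t)ᵀU(t) = I_N for all t ≥ 0. -/
open Matrix

private lemma stmt_7_abs_le_pinorm {N : ℕ} (f : Fin N → Fin N → ℝ) (i j : Fin N) :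
    |f i j| ≤ ‖f‖ := by
  calc |f i j| = ‖f i j‖ := (Real.norm_eq_abs _).symm
    _ ≤ ‖f i‖ := norm_le_pi_norm (f i) j
    _ ≤ ‖f‖ := norm_le_pi_norm f i

private lemma stmt_7_key {n N : ℕ} (H : Matrix (Fin n) (Fin n) ℝ) (hH : H.IsSymm)
    (U : Matrix (Fin n) (Fin N) ℝ) :
    (-(H * U - U * (Uᵀ * H * U)))ᵀ * U + Uᵀ * (-(H * U - U * (Uᵀ * H * U)))
      = (Uᵀ * H * U) * (Uᵀ * U - 1) + (Uᵀ * U - 1) * (Uᵀ * H * U) := by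
  have h1 : (Uᵀ * H * U)ᵀ = Uᵀ * H * U := by
    simp [Matrix.transpose_mul, Matrix.mul_assoc, hH.eq]
  simp only [transpose_neg, transpose_sub, transpose_mul, transpose_transpose, hH.eq,
    Matrix.neg_mul, Matrix.mul_neg, Matrix.sub_mul, Matrix.mul_sub, Matrix.mul_one,
    Matrix.one_mul, Matrix.mul_assoc]
  abel

/-- Orthonormality is preserved by the quasi-Grassmannian gradient flow:
if `U(0)ᵀU(0) = I`, then `U(t)ᵀU(t) = I` for all `t ≥ 0`. -/
theorem stmt_7 {n N : ℕ} (H : Matrix (Fin n) (Fin n) ℝ) (hH : H.IsSymm)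
    (U : ℝ → Matrix (Fin n) (Fin N) ℝ)
    (hflow : ∀ t ≥ (0:ℝ), ∀ i j,
      HasDerivWithinAt (fun s => U s i j)
        ((-(H * U t - U t * ((U t)ᵀ * H * U t))) i j) (Set.Ici 0) t)
    (h0 : (U 0)ᵀ * U 0 = 1) :
    ∀ t ≥ (0:ℝ), (U t)ᵀ * U t = 1 := by
  intro b hb
  classical
  -- the E-valued (E = Fin N → Fin N → ℝ) version of G(t) = U(t)ᵀU(t) - 1
  set g : ℝ → (Fin N → Fin N → ℝ) :=
    fun s i j => ((U s)ᵀ * U s - 1 : Matrix (Fin N) (Fin N) ℝ) i j with hgdef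
  set A : ℝ → Matrix (Fin N) (Fin N) ℝ := fun s => (U s)ᵀ * H * U s with hA
  -- continuity of entries of U on [0, ∞)
  have hUc : ∀ k i, ContinuousOn (fun s => U s k i) (Set.Ici (0:ℝ)) := fun k i u hu =>
    (hflow u hu k i).continuousWithinAt
  -- derivative of g
  have hder : ∀ u ∈ Set.Ici (0:ℝ),
      HasDerivWithinAt g
        (fun i j => (A u * Matrix.of (g u) + Matrix.of (g u) * A u) i j) (Set.Ici 0) u := by
    intro u hu
    rw [hasDerivWithinAt_pi]; intro i
    rw [hasDerivWithinAt_pi]; intro j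
    have h1 : HasDerivWithinAt (fun s => ((U s)ᵀ * U s) i j)
        (((-(H * U u - U u * A u))ᵀ * U u + (U u)ᵀ * (-(H * U u - U u * A u))) i j)
        (Set.Ici 0) u := by
      have hfun : ∀ s, ((U s)ᵀ * U s) i j = ∑ k, U s k i * U s k j := by
        intro s; simp [Matrix.mul_apply, Matrix.transpose_apply]
      have hval : (((-(H * U u - U u * A u))ᵀ * U u + (U u)ᵀ * (-(H * U u - U u * A u))) i j)
          = ∑ k, ((-(H * U u - U u * A u)) k i * U u k j
              + U u k i * (-(H * U u - U u * A u)) k j) := by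
        simp only [Matrix.add_apply, Matrix.mul_apply, Matrix.transpose_apply]
        rw [← Finset.sum_add_distrib]
      simp only [hfun, hval]
      exact HasDerivWithinAt.fun_sum fun k _ => (hflow u hu k i).mul (hflow u hu k j)
    rw [stmt_7_key H hH (U u)] at h1
    have h2 : HasDerivWithinAt (fun s => ((U s)ᵀ * U s) i j - (1 : Matrix (Fin N) (Fin N) ℝ) i j)
        ((((U u)ᵀ * H * U u * ((U u)ᵀ * U u - 1)
          + ((U u)ᵀ * U u - 1) * ((U u)ᵀ * H * U u) : Matrix (Fin N) (Fin N) ℝ)) i j)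
        (Set.Ici 0) u := h1.sub_const _
    exact h2
  -- a bound for A on [0, b]
  have hAc : ContinuousOn (fun u => (fun i j => A u i j : Fin N → Fin N → ℝ)) (Set.Icc 0 b) := by
    apply continuousOn_pi.2; intro i
    apply continuousOn_pi.2; intro j
    have hfun : ∀ u, A u i j = ∑ l, (∑ k, U u k i * H k l) * U u l j := by
      intro u; simp [hA, Matrix.mul_apply, Matrix.transpose_apply]
    simp only [hfun]
    apply continuousOn_finset_sum; intro l _
    exact (ContinuousOn.mul
      (continuousOn_finset_sum _ fun k _ =>
        ((hUc k i).mono Set.Icc_subset_Ici_self).mul continuousOn_const)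
      ((hUc l j).mono Set.Icc_subset_Ici_self))
  obtain ⟨C, hC⟩ := isCompact_Icc.exists_bound_of_continuousOn hAc
  have hC0 : 0 ≤ C := le_trans (norm_nonneg _) (hC 0 ⟨le_refl 0, hb⟩)
  have hCentry : ∀ u ∈ Set.Icc (0:ℝ) b, ∀ i j, |A u i j| ≤ C := fun u hu i j =>
    le_trans (stmt_7_abs_le_pinorm (fun i j => A u i j) i j) (hC u hu)
  -- the (time-truncated) vector field
  set v : ℝ → (Fin N → Fin N → ℝ) → (Fin N → Fin N → ℝ) :=
    fun s x i j => (A (max 0 (min s b)) * Matrix.of x + Matrix.of x * A (max 0 (min s b))) i j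
    with hvdef
  have hproj : ∀ s, max 0 (min s b) ∈ Set.Icc (0:ℝ) b :=
    fun s => ⟨le_max_left _ _, max_le hb (min_le_right _ _)⟩
  set K : NNReal := Real.toNNReal (2 * N * C) with hKdef
  have hKcoe : (K : ℝ) = 2 * N * C := Real.coe_toNNReal _ (by positivity)
  have hlip : ∀ s, LipschitzWith K (v s) := by
    intro s
    apply LipschitzWith.of_dist_le_mul
    intro x y
    rw [dist_eq_norm, dist_eq_norm, hKcoe]
    have hd0 : (0:ℝ) ≤ 2 * N * C * ‖x - y‖ := by positivity
    rw [pi_norm_le_iff_of_nonneg hd0]; intro i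
    rw [pi_norm_le_iff_of_nonneg hd0]; intro j
    have hentry : ∀ (k l : Fin N), |x k l - y k l| ≤ ‖x - y‖ := fun k l =>
      stmt_7_abs_le_pinorm (x - y) k l
    have hB := fun i j => hCentry _ (hproj s) i j
    have e1 : ∑ k, A (max 0 (min s b)) i k * (x k j - y k j)
        = ∑ k, A (max 0 (min s b)) i k * x k j - ∑ k, A (max 0 (min s b)) i k * y k j := by
      rw [← Finset.sum_sub_distrib]
      exact Finset.sum_congr rfl fun k _ => by ring
    have e2 : ∑ k, (x i k - y i k) * A (max 0 (min s b)) k j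
        = ∑ k, x i k * A (max 0 (min s b)) k j - ∑ k, y i k * A (max 0 (min s b)) k j := by
      rw [← Finset.sum_sub_distrib]
      exact Finset.sum_congr rfl fun k _ => by ring
    have hexp : (v s x - v s y) i j
        = ∑ k, A (max 0 (min s b)) i k * (x k j - y k j)
          + ∑ k, (x i k - y i k) * A (max 0 (min s b)) k j := by
      show v s x i j - v s y i j = _
      simp only [hvdef, Matrix.add_apply, Matrix.mul_apply, Matrix.of_apply]
      rw [e1, e2]
      ring
    rw [Real.norm_eq_abs, hexp]
    calc |∑ k, A (max 0 (min s b)) i k * (x k j - y k j)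
          + ∑ k, (x i k - y i k) * A (max 0 (min s b)) k j|
        ≤ |∑ k, A (max 0 (min s b)) i k * (x k j - y k j)|
          + |∑ k, (x i k - y i k) * A (max 0 (min s b)) k j| := abs_add_le _ _
      _ ≤ (∑ k, |A (max 0 (min s b)) i k * (x k j - y k j)|)
          + ∑ k, |(x i k - y i k) * A (max 0 (min s b)) k j| :=
            add_le_add (Finset.abs_sum_le_sum_abs _ _) (Finset.abs_sum_le_sum_abs _ _)
      _ ≤ (∑ _k : Fin N, C * ‖x - y‖) + ∑ _k : Fin N, C * ‖x - y‖ := by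
            apply add_le_add <;> apply Finset.sum_le_sum <;> intro k _
            · rw [abs_mul]
              exact mul_le_mul (hB i k) (hentry k j) (abs_nonneg _) hC0
            · rw [abs_mul, mul_comm]
              exact mul_le_mul (hB k j) (hentry i k) (abs_nonneg _) hC0
      _ = 2 * N * C * ‖x - y‖ := by
            rw [Finset.sum_const, Finset.card_univ, Fintype.card_fin]
            ring
  -- g is a solution of the ODE given by v, on [0, b]
  have hgcont : ContinuousOn g (Set.Icc 0 b) := fun u hu =>
    ((hder u hu.1).continuousWithinAt).mono Set.Icc_subset_Ici_self
  have hf' : ∀ u ∈ Set.Ico (0:ℝ) b, HasDerivWithinAt g (v u (g u)) (Set.Ici u) u := by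
    intro u hu
    have h := (hder u hu.1).mono (Set.Ici_subset_Ici.2 hu.1)
    have hvg : v u (g u) = fun i j => (A u * Matrix.of (g u) + Matrix.of (g u) * A u) i j := by
      have hpr : max 0 (min u b) = u := by
        rw [min_eq_left hu.2.le, max_eq_right hu.1]
      simp only [hvdef, hpr]
    rw [hvg]
    exact h
  have hg' : ∀ u ∈ Set.Ico (0:ℝ) b,
      HasDerivWithinAt (fun _ : ℝ => (0 : Fin N → Fin N → ℝ)) (v u 0) (Set.Ici u) u := by
    intro u _
    have hv0 : v u 0 = 0 := by
      funext i j
      show (A (max 0 (min u b)) * Matrix.of (0 : Fin N → Fin N → ℝ)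
        + Matrix.of (0 : Fin N → Fin N → ℝ) * A (max 0 (min u b))) i j = 0
      simp [Matrix.add_apply, Matrix.mul_apply]
    rw [hv0]
    exact hasDerivWithinAt_const _ _ _
  have hinit : g 0 = (fun _ : ℝ => (0 : Fin N → Fin N → ℝ)) 0 := by
    funext i j
    show ((U 0)ᵀ * U 0 - 1 : Matrix (Fin N) (Fin N) ℝ) i j = 0
    rw [h0]
    simp
  have huniq := ODE_solution_unique (v := v) (K := K) (f := g)
    (g := fun _ : ℝ => (0 : Fin N → Fin N → ℝ)) (a := 0) (b := b)
    hlip hgcont hf' continuousOn_const hg' hinit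
  have hgb : g b = 0 := huniq ⟨hb, le_refl b⟩
  ext i j
  have h1 : ((U b)ᵀ * U b - 1 : Matrix (Fin N) (Fin N) ℝ) i j = 0 := congrFun (congrFun hgb i) j
  have h2 : ((U b)ᵀ * U b) i j - (1 : Matrix (Fin N) (Fin N) ℝ) i j = 0 := by
    simpa [Matrix.sub_apply] using h1
  linarith [h2]
end

section
/- Let H be real symmetric n×n and U ∈ ℝ^{n×N}. Then ‖∇_G E(U)‖_F² − tr((HU)ᵀ ∇_G E(U)) = −tr[(UᵀHU)²(I_N − UᵀU)] − tr((HU)ᵀ U Uᵀ ∇_{G̃}E(U)), where ∇_G E(U) = HU − U UᵀHU and ∇_{G̃}E(U) = HU UᵀU − U UᵀHU; moreover the last trace vanishes, so ‖∇_G E(U)‖_F² − tr((HU)ᵀ∇_G E(U)) = −tr[(UᵀHU)²(I_N − UᵀU)]. -/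
open Matrix

/-- Frobenius norm of a real matrix. -/
noncomputable def frobNorm {n N : ℕ} (A : Matrix (Fin n) (Fin N) ℝ) : ℝ :=
  Real.sqrt (Matrix.trace (Aᵀ * A))

/-- With `∇_G E(U) = HU − U UᵀHU` and `∇_{G̃}E(U) = HU(UᵀU) − U(UᵀHU)`:
`‖∇_G E(U)‖² − tr((HU)ᵀ∇_G E(U)) = −tr[(UᵀHU)²(I − UᵀU)] − tr((HU)ᵀUUᵀ∇_{G̃}E(U))`,
and the last trace vanishes. -/
theorem stmt_11 {n N : ℕ} (H : Matrix (Fin n) (Fin n) ℝ) (hH : H.IsSymm)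
    (U : Matrix (Fin n) (Fin N) ℝ) :
    (frobNorm (H * U - U * (Uᵀ * H * U))) ^ 2
        - Matrix.trace ((H * U)ᵀ * (H * U - U * (Uᵀ * H * U)))
      = -Matrix.trace ((Uᵀ * H * U) ^ 2 * (1 - Uᵀ * U))
        - Matrix.trace ((H * U)ᵀ * U * Uᵀ * (H * U * (Uᵀ * U) - U * (Uᵀ * H * U))) ∧
    Matrix.trace ((H * U)ᵀ * U * Uᵀ * (H * U * (Uᵀ * U) - U * (Uᵀ * H * U))) = 0 ∧
    (frobNorm (H * U - U * (Uᵀ * H * U))) ^ 2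
        - Matrix.trace ((H * U)ᵀ * (H * U - U * (Uᵀ * H * U)))
      = -Matrix.trace ((Uᵀ * H * U) ^ 2 * (1 - Uᵀ * U)) := by
  have hcyc := Matrix.trace_mul_comm (Uᵀ * (H * U)) (Uᵀ * (H * (U * (Uᵀ * U))))
  simp only [Matrix.mul_assoc] at hcyc
  have hz : Matrix.trace ((H * U)ᵀ * U * Uᵀ * (H * U * (Uᵀ * U) - U * (Uᵀ * H * U))) = 0 := by
    simp only [Matrix.transpose_mul, hH.eq, Matrix.mul_sub, Matrix.sub_mul,
      Matrix.trace_sub, Matrix.mul_assoc]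
    rw [sub_eq_zero]
    exact hcyc
  have hfrob : (frobNorm (H * U - U * (Uᵀ * H * U))) ^ 2
      = Matrix.trace ((H * U - U * (Uᵀ * H * U))ᵀ * (H * U - U * (Uᵀ * H * U))) := by
    rw [frobNorm, Real.sq_sqrt]
    simp only [Matrix.trace, Matrix.mul_apply, Matrix.diag, Matrix.transpose_apply]
    exact Finset.sum_nonneg fun j _ => Finset.sum_nonneg fun i _ => mul_self_nonneg _
  have hmain : (frobNorm (H * U - U * (Uᵀ * H * U))) ^ 2
        - Matrix.trace ((H * U)ᵀ * (H * U - U * (Uᵀ * H * U)))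
      = -Matrix.trace ((Uᵀ * H * U) ^ 2 * (1 - Uᵀ * U)) := by
    rw [hfrob]
    simp only [Matrix.transpose_mul, Matrix.transpose_sub, Matrix.transpose_transpose, hH.eq,
      sq, Matrix.mul_sub, Matrix.sub_mul, Matrix.mul_one, Matrix.trace_sub,
      Matrix.mul_assoc]
    ring_nf
    rw [hcyc]
  exact ⟨by rw [hmain, hz, sub_zero], hz, hmain⟩
end

section
/- Let H be a real symmetric n×n matrix with eigenvalues λ₁ ≤ … ≤ λ_n and orthonormal eigenvectors v₁,…,v_n, and let v = Σ_j α_j v_j be a unit vector with Σ_j α_j² = 1. Suppose the index set I(v) = {j : α_j ≠ 0 and λ_j < 0} is nonempty and let λ_{j*} = −max{|λ_j| : j ∈ I(v)}. Then the Rayleigh quotient R(t,v) = (vᵀ exp(−2Ht) H v)/(vᵀ exp(−2Ht) v) converges to λ_{j*} as t → ∞. -/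
open Matrix NormedSpace Filter

/-- Let `H` be real symmetric with orthonormal eigenvectors `V j` and eigenvalues `d j`,
and let `v = ∑ α j • V j` be a unit vector (`∑ α j² = 1`).  If the set
`{d j : α j ≠ 0, d j < 0}` is nonempty with least element `lam` (which equals
`−max{|d j| : j ∈ I(v)}`), then the Rayleigh quotient
`R(t,v) = (vᵀ exp(−2Ht) H v)/(vᵀ exp(−2Ht) v)` converges to `lam` as `t → ∞`. -/
theorem stmt_19 {n : ℕ} (H : Matrix (Fin n) (Fin n) ℝ) (hH : H.IsSymm)
    (d : Fin n → ℝ) (V : Fin n → Fin n → ℝ)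
    (horth : ∀ j k : Fin n, V j ⬝ᵥ V k = if j = k then (1:ℝ) else 0)
    (heig : ∀ j : Fin n, H *ᵥ V j = d j • V j)
    (α : Fin n → ℝ) (v : Fin n → ℝ)
    (hv : v = ∑ j : Fin n, α j • V j)
    (hunit : ∑ j : Fin n, (α j) ^ 2 = 1)
    (lam : ℝ)
    (hlam : IsLeast {r : ℝ | ∃ j : Fin n, α j ≠ 0 ∧ d j < 0 ∧ r = d j} lam) :
    Tendsto (fun t : ℝ =>
        (v ⬝ᵥ ((exp ((-(2 * t)) • H)) *ᵥ (H *ᵥ v))) /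
          (v ⬝ᵥ ((exp ((-(2 * t)) • H)) *ᵥ v)))
      atTop (nhds lam) := by
  classical
  obtain ⟨⟨j₀, hj₀ne, hj₀neg, hj₀eq⟩, hlb⟩ := hlam
  have hlamneg : lam < 0 := by rw [hj₀eq]; exact hj₀neg
  -- the orthogonal matrix of eigenvectors
  set P : Matrix (Fin n) (Fin n) ℝ := Matrix.of (fun i j => V j i) with hPdef
  have hPtP : Pᵀ * P = 1 := by
    ext j k
    simpa [hPdef, Matrix.mul_apply, Matrix.one_apply, dotProduct] using horth j k
  have hPPt : P * Pᵀ = 1 := mul_eq_one_comm.mpr hPtP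
  have hUnit : IsUnit P := ⟨⟨P, Pᵀ, hPPt, hPtP⟩, rfl⟩
  have hPinv : P⁻¹ = Pᵀ := Matrix.inv_eq_left_inv hPtP
  -- diagonalization
  have hHP : H = P * Matrix.diagonal d * Pᵀ := by
    have h1 : H * P = P * Matrix.diagonal d := by
      ext i j
      have h2 := congrFun (heig j) i
      simp only [Matrix.mulVec, dotProduct, Pi.smul_apply, smul_eq_mul] at h2
      simp only [hPdef, Matrix.mul_apply, Matrix.of_apply, Matrix.diagonal_apply, mul_ite,
        mul_zero, Finset.sum_ite_eq', Finset.mem_univ, if_true, h2]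
      ring
    calc H = H * (P * Pᵀ) := by rw [hPPt, Matrix.mul_one]
    _ = (H * P) * Pᵀ := by rw [Matrix.mul_assoc]
    _ = P * Matrix.diagonal d * Pᵀ := by rw [h1]
  -- the matrix exponential
  have hexp : ∀ s : ℝ, exp (s • H)
      = P * Matrix.diagonal (fun j => Real.exp (s * d j)) * Pᵀ := by
    intro s
    have h1 : s • H = P * Matrix.diagonal (fun j => s * d j) * P⁻¹ := by
      rw [hPinv, hHP]
      have hd : Matrix.diagonal (fun j => s * d j) = s • Matrix.diagonal d := by
        rw [← Matrix.diagonal_smul]; rfl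
      rw [hd, Matrix.mul_smul, Matrix.smul_mul]
    have hfun : (exp fun j => s * d j) = fun j => Real.exp (s * d j) := by
      funext j
      rw [Pi.coe_exp, ← Real.exp_eq_exp_ℝ]
    rw [h1, Matrix.exp_conj P (Matrix.diagonal fun j => s * d j) hUnit,
      Matrix.exp_diagonal, hPinv, hfun]
  -- coordinates of v
  have hVv : ∀ j, V j ⬝ᵥ v = α j := by
    intro j
    rw [hv]
    simp only [dotProduct, Finset.sum_apply, Pi.smul_apply, smul_eq_mul,
      Finset.mul_sum]
    rw [Finset.sum_comm]
    have : ∀ k, ∑ i, V j i * (α k * V k i) = α k * (if j = k then (1:ℝ) else 0) := by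
      intro k
      rw [← horth j k]
      simp only [dotProduct, Finset.mul_sum]
      apply Finset.sum_congr rfl
      intro i _
      ring
    simp only [this, mul_ite, mul_one, mul_zero, Finset.sum_ite_eq, Finset.mem_univ, if_true]
  have hPtv : Pᵀ *ᵥ v = α := by
    funext j
    simpa [hPdef, Matrix.mulVec, dotProduct] using hVv j
  have hVHv : ∀ j, V j ⬝ᵥ (H *ᵥ v) = d j * α j := by
    intro j
    rw [Matrix.dotProduct_mulVec]
    have h1 : V j ᵥ* H = d j • V j := by
      rw [← Matrix.mulVec_transpose, hH.eq, heig]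
    rw [h1, smul_dotProduct, hVv, smul_eq_mul]
  have hPtHv : Pᵀ *ᵥ (H *ᵥ v) = fun j => d j * α j := by
    funext j
    simpa [hPdef, Matrix.mulVec, dotProduct] using hVHv j
  -- the quadratic forms
  have key : ∀ (t : ℝ) (w β : Fin n → ℝ), Pᵀ *ᵥ w = β →
      v ⬝ᵥ (exp ((-(2*t)) • H) *ᵥ w)
        = ∑ j, α j * (Real.exp ((-(2*t)) * d j) * β j) := by
    intro t w β hβ
    rw [hexp, ← Matrix.mulVec_mulVec, ← Matrix.mulVec_mulVec, hβ,
      Matrix.dotProduct_mulVec, ← Matrix.mulVec_transpose, hPtv]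
    simp [dotProduct, Matrix.mulVec_diagonal]
  -- lower bound on eigenvalues with nonzero coefficient
  have hge : ∀ j, α j ≠ 0 → lam ≤ d j := by
    intro j hj
    rcases lt_or_ge (d j) 0 with h | h
    · exact hlb ⟨j, hj, h, rfl⟩
    · linarith
  -- scalar limit lemma
  have hlim : ∀ (w : Fin n → ℝ), (∀ j, w j ≠ 0 → lam ≤ d j) →
      Tendsto (fun t => ∑ j, w j * Real.exp ((-(2*t)) * d j) * Real.exp (2*t*lam))
        atTop (nhds (∑ j, if d j = lam then w j else 0)) := by
    intro w hw
    apply tendsto_finset_sum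
    intro j _
    rcases eq_or_ne (d j) lam with h | h
    · rw [if_pos h]
      have heq : (fun t => w j * Real.exp ((-(2*t)) * d j) * Real.exp (2*t*lam))
          = fun _ => w j := by
        funext t
        rw [h, mul_assoc, ← Real.exp_add]
        have : -(2*t) * lam + 2*t*lam = 0 := by ring
        rw [this, Real.exp_zero, mul_one]
      rw [heq]
      exact tendsto_const_nhds
    · rw [if_neg h]
      rcases eq_or_ne (w j) 0 with hw0 | hw0
      · simp only [hw0, zero_mul]
        exact tendsto_const_nhds
      · have hgt : lam < d j := lt_of_le_of_ne (hw j hw0) (Ne.symm h)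
        have heq : (fun t => w j * Real.exp ((-(2*t)) * d j) * Real.exp (2*t*lam))
            = fun t => w j * Real.exp (-((2*d j - 2*lam) * t)) := by
          funext t
          rw [mul_assoc, ← Real.exp_add]
          congr 2
          ring
        rw [heq]
        have h0 : Tendsto (fun t : ℝ => Real.exp (-((2*d j - 2*lam) * t)))
            atTop (nhds 0) := by
          apply Real.tendsto_exp_atBot.comp
          apply tendsto_neg_atTop_atBot.comp
          exact (tendsto_id.const_mul_atTop (by linarith))
        simpa using tendsto_const_nhds.mul h0
  -- the two limits
  have hG := hlim (fun j => α j ^ 2) (fun j hj => hge j (fun h => hj (by simp [h])))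
  have hF := hlim (fun j => α j ^ 2 * d j)
    (fun j hj => hge j (fun h => hj (by simp [h])))
  set S : ℝ := ∑ j, if d j = lam then α j ^ 2 else 0 with hSdef
  have hSpos : 0 < S := by
    apply Finset.sum_pos'
    · intro j _
      split_ifs
      · positivity
      · exact le_rfl
    · exact ⟨j₀, Finset.mem_univ _, by rw [if_pos hj₀eq.symm]; positivity⟩
  have hSne : S ≠ 0 := ne_of_gt hSpos
  have hFval : (∑ j, if d j = lam then α j ^ 2 * d j else 0) = lam * S := by
    rw [hSdef, Finset.mul_sum]
    apply Finset.sum_congr rfl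
    intro j _
    split_ifs with h
    · rw [h]; ring
    · ring
  rw [hFval] at hF
  have final := hF.div hG hSne
  rw [mul_div_cancel_right₀ _ hSne] at final
  apply final.congr
  intro t
  rw [key t v α hPtv, key t (H *ᵥ v) (fun j => d j * α j) hPtHv]
  have e1 : (∑ j, α j * (Real.exp ((-(2*t)) * d j) * (d j * α j)))
      = ∑ j, α j ^ 2 * d j * Real.exp ((-(2*t)) * d j) := by
    apply Finset.sum_congr rfl; intro j _; ring
  have e2 : (∑ j, α j * (Real.exp ((-(2*t)) * d j) * α j))
      = ∑ j, α j ^ 2 * Real.exp ((-(2*t)) * d j) := by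
    apply Finset.sum_congr rfl; intro j _; ring
  simp only [Pi.div_apply]
  rw [e1, e2, ← Finset.sum_mul, ← Finset.sum_mul,
    mul_div_mul_right _ _ (Real.exp_ne_zero (2*t*lam))]
end
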